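/- Let F be a uniform filter on an infinite cardinal μ, and let κ be a strongly inaccessible cardinal such that every κ-Aronszajn tree admits an F-ascent path. Then pr₁(κ, κ, 2, (2, μ⁺)) fails: for every coloring c : [κ]² → 2 there exist A ⊆ κ of size κ, a cardinal σ ≤ μ, a pairwise disjoint family B ⊆ [κ]^σ of size κ, and a color τ < 2 such that for no α ∈ A and b ∈ B with α < min(b) does c''({α} × b) = {τ}. -/

import Mathlib

open Set Cardinal

/-- A tree, presented by its strict order and a level function. -/
structure OrdTree where
  carrier : Type
  lt : carrier → carrier → Prop
  level : carrier → Ordinal.{0}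

/-- `T` is a tree of height `lam`. -/
def OrdTree.IsOfHeight (T : OrdTree) (lam : Ordinal.{0}) : Prop :=
  (∀ x y z, T.lt x y → T.lt y z → T.lt x z) ∧
  (∀ x, ¬ T.lt x x) ∧
  (∀ x y, T.lt x y → T.level x < T.level y) ∧
  (∀ y, ∀ α < T.level y, ∃! x, T.lt x y ∧ T.level x = α) ∧
  (∀ x y z, T.lt x z → T.lt y z → (x = y ∨ T.lt x y ∨ T.lt y x)) ∧
  (∀ x, T.level x < lam) ∧ (∀ α < lam, ∃ x, T.level x = α)

/-- All levels of `T` below `lam` have size `< κ`. -/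
def OrdTree.SmallLevels (T : OrdTree) (lam : Ordinal.{0}) (κ : Cardinal.{0}) : Prop :=
  ∀ α < lam, #{x : T.carrier // T.level x = α} < κ

/-- `B` is a cofinal branch of `T`. -/
def OrdTree.CofinalBranch (T : OrdTree) (lam : Ordinal.{0}) (B : Set T.carrier) : Prop :=
  (∀ x ∈ B, ∀ y ∈ B, x = y ∨ T.lt x y ∨ T.lt y x) ∧
  ∀ α < lam, ∃ x ∈ B, α ≤ T.level x

/-- `T` is a `κ`-Aronszajn tree. -/
def OrdTree.Aronszajn (T : OrdTree) (κ : Cardinal.{0}) : Prop :=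
  T.IsOfHeight κ.ord ∧ T.SmallLevels κ.ord κ ∧ ¬ ∃ B, T.CofinalBranch κ.ord B

/-- `f` is an `F`-ascent path through `T` (of height `κ`). -/
def OrdTree.AscentPath {M : Type} (T : OrdTree) (κ : Cardinal.{0}) (F : Filter M)
    (f : Ordinal.{0} → M → T.carrier) : Prop :=
  (∀ α < κ.ord, ∀ i, T.level (f α i) = α) ∧
  ∀ α β, α < β → β < κ.ord → {i | T.lt (f α i) (f β i)} ∈ F

open Set Cardinal

noncomputable section
namespace Stmt10Aux

variable (c : Ordinal.{0} → Ordinal.{0} → Bool) (θ : Ordinal.{0})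

/-- coercion from `θ.ToType` to ordinals below `θ`. -/
def io (t : θ.ToType) : Ordinal := ((Ordinal.ToType.mk (o := θ)).symm t : Ordinal)

lemma io_lt (t : θ.ToType) : io θ t < θ := ((Ordinal.ToType.mk (o := θ)).symm t).2

lemma io_inj : Function.Injective (io θ) := fun a b h =>
  (Ordinal.ToType.mk (o := θ)).symm.injective (Subtype.coe_injective h)


/-- the element of `θ.ToType` corresponding to `α < θ`. -/
def en (α : Ordinal) (h : α < θ) : θ.ToType := Ordinal.ToType.mk (o := θ) ⟨α, h⟩

@[simp] lemma io_en (α : Ordinal) (h : α < θ) : io θ (en θ α h) = α := by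
  simp [io, en]

def plev (p : θ.ToType × θ.ToType) : Ordinal := min (io θ p.1) (io θ p.2)
def pwit (p : θ.ToType × θ.ToType) : Ordinal := max (io θ p.1) (io θ p.2)
def ptop (p : θ.ToType × θ.ToType) : θ.ToType := if io θ p.1 ≤ io θ p.2 then p.2 else p.1

lemma io_ptop (p : θ.ToType × θ.ToType) : io θ (ptop θ p) = pwit θ p := by
  unfold ptop pwit
  split <;> simp_all [max_eq_right, max_eq_left, le_of_not_ge]

lemma plev_le_pwit (p : θ.ToType × θ.ToType) : plev θ p ≤ pwit θ p :=
  min_le_max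

lemma plev_lt (p : θ.ToType × θ.ToType) : plev θ p < θ :=
  lt_of_le_of_lt (min_le_left _ _) (io_lt θ p.1)

lemma pwit_lt (p : θ.ToType × θ.ToType) : pwit θ p < θ :=
  max_lt (io_lt θ p.1) (io_lt θ p.2)

/-- the equivalence of pairs: same level, same trace -/
def PR (p q : θ.ToType × θ.ToType) : Prop :=
  plev θ p = plev θ q ∧ ∀ γ < plev θ p, c γ (pwit θ p) = c γ (pwit θ q)

lemma PR_refl (p) : PR c θ p p := ⟨rfl, fun _ _ => rfl⟩

lemma PR_symm {p q} (h : PR c θ p q) : PR c θ q p :=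
  ⟨h.1.symm, fun γ hγ => (h.2 γ (h.1 ▸ hγ)).symm⟩

lemma PR_trans {p q r} (h : PR c θ p q) (h' : PR c θ q r) : PR c θ p r :=
  ⟨h.1.trans h'.1, fun γ hγ => (h.2 γ hγ).trans (h'.2 γ (h.1 ▸ hγ))⟩

def pSetoid : Setoid (θ.ToType × θ.ToType) :=
  ⟨PR c θ, PR_refl c θ, PR_symm c θ, PR_trans c θ⟩

def Car := Quotient (pSetoid c θ)

def mkC (p : θ.ToType × θ.ToType) : Car c θ := Quotient.mk (pSetoid c θ) p

def lev (x : Car c θ) : Ordinal := plev θ x.out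
def wv (x : Car c θ) : Ordinal := pwit θ x.out

def tlt (x y : Car c θ) : Prop :=
  lev c θ x < lev c θ y ∧ ∀ γ < lev c θ x, c γ (wv c θ x) = c γ (wv c θ y)

/-- the derived tree of the coloring `c`. -/
def Tr : OrdTree := ⟨Car c θ, tlt c θ, lev c θ⟩

lemma eq_of_PR {x y : Car c θ} (h : PR c θ x.out y.out) : x = y := by
  rw [← Quotient.out_eq x, ← Quotient.out_eq y]
  exact Quotient.sound h

lemma PR_out_mk (p : θ.ToType × θ.ToType) : PR c θ (Quotient.out (mkC c θ p)) p :=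
  Quotient.exact (Quotient.out_eq (mkC c θ p))

lemma lev_mk (p : θ.ToType × θ.ToType) : lev c θ (mkC c θ p) = plev θ p :=
  (PR_out_mk c θ p).1

lemma trace_mk (p : θ.ToType × θ.ToType) {γ : Ordinal} (h : γ < plev θ p) :
    c γ (wv c θ (mkC c θ p)) = c γ (pwit θ p) :=
  (PR_out_mk c θ p).2 γ (by rw [(PR_out_mk c θ p).1]; exact h)

lemma lev_lt (x : Car c θ) : lev c θ x < θ := plev_lt θ _

lemma lev_le_wv (x : Car c θ) : lev c θ x ≤ wv c θ x := plev_le_pwit θ _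

lemma wv_lt (x : Car c θ) : wv c θ x < θ := pwit_lt θ _

/-- the node of level `α` with witness `β`. -/
def nd (α β : Ordinal) (h1 : α ≤ β) (h2 : β < θ) : Car c θ :=
  mkC c θ (en θ α (lt_of_le_of_lt h1 h2), en θ β h2)

lemma plev_nd_pair (α β : Ordinal) (h1 : α ≤ β) (h2 : β < θ) :
    plev θ ((en θ α (lt_of_le_of_lt h1 h2), en θ β h2)) = α := by
  unfold plev; rw [io_en, io_en]; exact min_eq_left h1

lemma pwit_nd_pair (α β : Ordinal) (h1 : α ≤ β) (h2 : β < θ) :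
    pwit θ ((en θ α (lt_of_le_of_lt h1 h2), en θ β h2)) = β := by
  unfold pwit; rw [io_en, io_en]; exact max_eq_right h1

lemma lev_nd (α β : Ordinal) (h1 : α ≤ β) (h2 : β < θ) : lev c θ (nd c θ α β h1 h2) = α := by
  rw [nd, lev_mk, plev_nd_pair θ α β h1 h2]

lemma trace_nd (α β : Ordinal) (h1 : α ≤ β) (h2 : β < θ) {γ : Ordinal} (hγ : γ < α) :
    c γ (wv c θ (nd c θ α β h1 h2)) = c γ β := by
  have hp := plev_nd_pair θ α β h1 h2
  have hw := pwit_nd_pair θ α β h1 h2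
  rw [nd, trace_mk c θ _ (by rw [hp]; exact hγ), hw]

lemma tlt_trans {x y z : Car c θ} (h : tlt c θ x y) (h' : tlt c θ y z) : tlt c θ x z :=
  ⟨h.1.trans h'.1, fun γ hγ => (h.2 γ hγ).trans (h'.2 γ (hγ.trans h.1))⟩

lemma tlt_comp {x y z : Car c θ} (hx : tlt c θ x z) (hy : tlt c θ y z) :
    x = y ∨ tlt c θ x y ∨ tlt c θ y x := by
  rcases lt_trichotomy (lev c θ x) (lev c θ y) with h | h | h
  · exact Or.inr (Or.inl ⟨h, fun γ hγ => (hx.2 γ hγ).trans ((hy.2 γ (hγ.trans h)).symm)⟩)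
  · refine Or.inl (eq_of_PR c θ ⟨h, fun γ hγ => ?_⟩)
    exact (hx.2 γ hγ).trans ((hy.2 γ (h ▸ hγ)).symm)
  · exact Or.inr (Or.inr ⟨h, fun γ hγ => (hy.2 γ hγ).trans ((hx.2 γ (hγ.trans h)).symm)⟩)

lemma exists_pred (y : Car c θ) (α : Ordinal) (hα : α < lev c θ y) :
    ∃! x, tlt c θ x y ∧ lev c θ x = α := by
  have hαθ : α < θ := hα.trans (lev_lt c θ y)
  set p : θ.ToType × θ.ToType := (en θ α hαθ, ptop θ y.out) with hp
  have hple : α ≤ pwit θ y.out := le_of_lt (lt_of_lt_of_le hα (plev_le_pwit θ y.out))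
  have hplev : plev θ p = α := by
    unfold plev; rw [hp]; simp only [io_en, io_ptop]
    exact min_eq_left hple
  have hpwit : pwit θ p = wv c θ y := by
    unfold pwit; rw [hp]; simp only [io_en, io_ptop]
    exact max_eq_right hple
  set x : Car c θ := mkC c θ p with hx
  have hlevx : lev c θ x = α := by rw [hx, lev_mk, hplev]
  have htr : ∀ γ < α, c γ (wv c θ x) = c γ (wv c θ y) := by
    intro γ hγ
    rw [hx, trace_mk c θ p (by rw [hplev]; exact hγ), hpwit]
  have htltx : tlt c θ x y := ⟨hlevx ▸ hα, fun γ hγ => htr γ (hlevx ▸ hγ)⟩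
  refine ⟨x, ⟨htltx, hlevx⟩, ?_⟩
  rintro x' ⟨hx'lt, hx'lev⟩
  apply eq_of_PR
  refine ⟨hx'lev.trans hlevx.symm, fun γ hγ => ?_⟩
  have hγα : γ < α := by rwa [← hx'lev]
  exact (hx'lt.2 γ hγ).trans ((htltx.2 γ (hlevx ▸ hγα)).symm)

lemma height_Tr : (Tr c θ).IsOfHeight θ := by
  refine ⟨fun x y z => tlt_trans c θ, fun x h => lt_irrefl _ h.1, fun x y h => h.1,
    fun y α hα => exists_pred c θ y α hα, fun x y z hx hy => tlt_comp c θ hx hy,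
    fun x => lev_lt c θ x, fun α hα => ⟨nd c θ α α le_rfl hα, lev_nd c θ α α le_rfl hα⟩⟩

lemma small_levels {κ : Cardinal.{0}} (hκ : κ.IsInaccessible) (hθ : θ = κ.ord) :
    (Tr c θ).SmallLevels θ κ := by
  intro α hα
  have hinj : Function.Injective
      (fun (x : {x : Car c θ // lev c θ x = α}) (t : α.ToType) => c (io α t) (wv c θ x.1)) := by
    intro x y h
    apply Subtype.ext
    apply eq_of_PR
    refine ⟨x.2.trans y.2.symm, fun γ hγ => ?_⟩
    have hγα : γ < α := by rw [← x.2]; exact hγ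
    have h2 := congrFun h (en α γ hγα)
    simpa only [io_en, wv] using h2
  calc #{x : Car c θ // lev c θ x = α} ≤ #(α.ToType → Bool) := Cardinal.mk_le_of_injective hinj
    _ = 2 ^ α.card := by rw [← Cardinal.power_def, Cardinal.mk_bool, Cardinal.mk_toType]
    _ < κ := hκ.isStrongLimit.two_power_lt (Cardinal.lt_ord.mp (hθ ▸ hα))
def seq (lam : Ordinal.{0}) (nxt : Ordinal.{0} → Ordinal.{0}) : lam.ToType → Ordinal.{0} :=
  (wellFounded_lt (α := lam.ToType)).fix
    (fun ξ ih => nxt (⨆ ζ : {ζ : lam.ToType // ζ < ξ}, ih ζ.1 ζ.2))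

def seqSup (lam : Ordinal.{0}) (nxt : Ordinal.{0} → Ordinal.{0}) (ξ : lam.ToType) : Ordinal.{0} :=
  ⨆ ζ : {ζ : lam.ToType // ζ < ξ}, seq lam nxt ζ.1

lemma seq_eq (lam : Ordinal.{0}) (nxt : Ordinal.{0} → Ordinal.{0}) (ξ : lam.ToType) :
    seq lam nxt ξ = nxt (seqSup lam nxt ξ) := by
  rw [seq, WellFounded.fix_eq]; rfl

lemma mk_seg (κ : Cardinal.{0}) (ξ : κ.ord.ToType) : #{ζ : κ.ord.ToType // ζ < ξ} < κ := by
  have h := Cardinal.mk_Iio_ord_toType ξ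
  exact h

section Seq

variable {κ : Cardinal.{0}} {nxt : Ordinal.{0} → Ordinal.{0}}
  (hreg : κ.IsRegular) (hnxt : ∀ s < κ.ord, s < nxt s ∧ nxt s < κ.ord)

include hreg hnxt

lemma seq_lt_aux : ∀ ξ : κ.ord.ToType, seq κ.ord nxt ξ < κ.ord ∧ seqSup κ.ord nxt ξ < κ.ord := by
  intro ξ
  refine (wellFounded_lt (α := κ.ord.ToType)).induction
    (C := fun ξ => seq κ.ord nxt ξ < κ.ord ∧ seqSup κ.ord nxt ξ < κ.ord) ξ ?_
  intro ξ ih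
  have hsup : seqSup κ.ord nxt ξ < κ.ord := by
    apply Cardinal.iSup_lt_ord_of_isRegular hreg (mk_seg κ ξ)
    intro ζ; exact (ih ζ.1 ζ.2).1
  exact ⟨by rw [seq_eq]; exact (hnxt _ hsup).2, hsup⟩

lemma seq_lt (ξ : κ.ord.ToType) : seq κ.ord nxt ξ < κ.ord := (seq_lt_aux hreg hnxt ξ).1

lemma seqSup_lt (ξ : κ.ord.ToType) : seqSup κ.ord nxt ξ < κ.ord := (seq_lt_aux hreg hnxt ξ).2

omit hreg hnxt in
lemma le_seqSup {ζ ξ : κ.ord.ToType} (h : ζ < ξ) : seq κ.ord nxt ζ ≤ seqSup κ.ord nxt ξ :=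
  le_ciSup (Ordinal.bddAbove_range _) (⟨ζ, h⟩ : {ζ : κ.ord.ToType // ζ < ξ})

lemma seqSup_lt_seq (ξ : κ.ord.ToType) : seqSup κ.ord nxt ξ < seq κ.ord nxt ξ := by
  rw [seq_eq]; exact (hnxt _ (seqSup_lt hreg hnxt ξ)).1

lemma seq_lt_seq {ζ ξ : κ.ord.ToType} (h : ζ < ξ) : seq κ.ord nxt ζ < seq κ.ord nxt ξ :=
  (le_seqSup h).trans_lt (seqSup_lt_seq hreg hnxt ξ)

end Seq
lemma mk_range_eq_lift' {A : Type} {B : Type 1} {f : A → B} (hf : Function.Injective f) :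
    #(Set.range f) = Cardinal.lift.{1} #A := by
  have h := Cardinal.lift_mk_eq'.mpr ⟨(Equiv.ofInjective f hf).symm⟩
  simpa using h

lemma mk_Iio_ord {κ : Cardinal.{0}} : #(Set.Iio κ.ord) = Cardinal.lift.{1} κ := by
  rw [Ordinal.mk_Iio_ordinal, Cardinal.card_ord]

lemma mk_lt_of_bounded {κ : Cardinal.{0}} {A : Set Ordinal.{0}} {s : Ordinal.{0}}
    (hs : s < κ.ord) (hA : A ⊆ Set.Iio s) : #A < Cardinal.lift.{1} κ := by
  calc #A ≤ #(Set.Iio s) := Cardinal.mk_le_mk_of_subset hA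
    _ = Cardinal.lift.{1} s.card := Ordinal.mk_Iio_ordinal s
    _ < Cardinal.lift.{1} κ := Cardinal.lift_lt.mpr (Cardinal.lt_ord.mp hs)

lemma compl_big {κ : Cardinal.{0}} (hκℵ : ℵ₀ ≤ κ) {D : Set Ordinal.{0}}
    (hD : D ⊆ Set.Iio κ.ord) (h : #D < Cardinal.lift.{1} κ) :
    #(Set.Iio κ.ord \ D : Set Ordinal.{0}) = Cardinal.lift.{1} κ := by
  have hsum := Cardinal.mk_diff_add_mk hD
  have hle : #(Set.Iio κ.ord \ D : Set Ordinal.{0}) ≤ Cardinal.lift.{1} κ := by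
    rw [← mk_Iio_ord]
    exact Cardinal.mk_le_mk_of_subset Set.diff_subset
  rcases hle.lt_or_eq with hlt | he
  · exfalso
    have : #(Set.Iio κ.ord) < Cardinal.lift.{1} κ := by
      rw [← hsum]
      exact Cardinal.add_lt_of_lt (Cardinal.aleph0_le_lift.mpr hκℵ) hlt h
    rw [mk_Iio_ord] at this
    exact lt_irrefl _ this
  · exact he

lemma unbounded_of_big {κ : Cardinal.{0}} (hκℵ : ℵ₀ ≤ κ) {A : Set Ordinal.{0}}
    (h : #A = Cardinal.lift.{1} κ) : ∀ s < κ.ord, ∃ γ ∈ A, s < γ := by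
  intro s hs
  by_contra hb
  push_neg at hb
  have hsub : A ⊆ Set.Iio (Order.succ s) := fun γ hγ =>
    lt_of_le_of_lt (hb γ hγ) (Order.lt_succ s)
  have := mk_lt_of_bounded ((Cardinal.isSuccLimit_ord hκℵ).succ_lt hs) hsub
  rw [h] at this
  exact lt_irrefl _ this

lemma bool_big {κ : Cardinal.{0}} (hκℵ : ℵ₀ ≤ κ) (g : Ordinal.{0} → Bool) :
    ∃ t : Bool, #{γ : Ordinal.{0} | γ < κ.ord ∧ g γ = t} = Cardinal.lift.{1} κ := by
  by_contra h
  push_neg at h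
  have hle : ∀ t : Bool, #{γ : Ordinal.{0} | γ < κ.ord ∧ g γ = t} < Cardinal.lift.{1} κ := by
    intro t
    refine lt_of_le_of_ne ?_ (h t)
    rw [← mk_Iio_ord]
    exact Cardinal.mk_le_mk_of_subset (fun γ hγ => hγ.1)
  have hsub : Set.Iio κ.ord ⊆
      {γ : Ordinal.{0} | γ < κ.ord ∧ g γ = true} ∪ {γ : Ordinal.{0} | γ < κ.ord ∧ g γ = false} := by
    intro γ hγ
    cases hg : g γ
    · exact Or.inr ⟨hγ, hg⟩
    · exact Or.inl ⟨hγ, hg⟩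
  have : Cardinal.lift.{1} κ < Cardinal.lift.{1} κ := by
    calc Cardinal.lift.{1} κ = #(Set.Iio κ.ord) := mk_Iio_ord.symm
      _ ≤ #({γ : Ordinal.{0} | γ < κ.ord ∧ g γ = true} ∪
            {γ : Ordinal.{0} | γ < κ.ord ∧ g γ = false} : Set Ordinal.{0}) :=
        Cardinal.mk_le_mk_of_subset hsub
      _ ≤ #{γ : Ordinal.{0} | γ < κ.ord ∧ g γ = true} +
            #{γ : Ordinal.{0} | γ < κ.ord ∧ g γ = false} := Cardinal.mk_union_le _ _
      _ < Cardinal.lift.{1} κ :=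
        Cardinal.add_lt_of_lt (Cardinal.aleph0_le_lift.mpr hκℵ) (hle true) (hle false)
  exact lt_irrefl _ this

end Stmt10Aux
end

open Stmt10Aux in
/-- Let `F` be a uniform filter on an infinite cardinal `μ` and `κ` a strongly
inaccessible cardinal such that every `κ`-Aronszajn tree admits an `F`-ascent path.
Then `pr₁(κ,κ,2,(2,μ⁺))` fails: for every `c : [κ]² → 2` there are `A ⊆ κ` of size
`κ`, a cardinal `σ ≤ μ`, a pairwise disjoint family `B ⊆ [κ]^σ` of size `κ`, and a
color `τ` such that for no `α ∈ A` and `b ∈ B` with `α < min b` is `c` constantly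
`τ` on `{α} × b`. -/
theorem stmt10 {M : Type} (μ κ : Cardinal.{0}) (hμ : ℵ₀ ≤ μ) (hM : #M = μ)
    (F : Filter M) (hFproper : F.NeBot) (hFuni : ∀ X ∈ F, #X = μ)
    (hκ : κ.IsInaccessible)
    (hasc : ∀ T : OrdTree, T.Aronszajn κ → ∃ f, T.AscentPath κ F f)
    (c : Ordinal.{0} → Ordinal.{0} → Bool) :
    ∃ A : Set Ordinal.{0}, A ⊆ Set.Iio κ.ord ∧ #A = Cardinal.lift.{1} κ ∧
    ∃ σ : Cardinal.{0}, σ ≤ μ ∧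
    ∃ Bf : Set (Set Ordinal.{0}),
      (∀ b ∈ Bf, b ⊆ Set.Iio κ.ord ∧ #b = Cardinal.lift.{1} σ) ∧
      (∀ b ∈ Bf, ∀ b' ∈ Bf, b ≠ b' → Disjoint b b') ∧
      #Bf = Cardinal.lift.{1} κ ∧
    ∃ τ : Bool, ∀ α ∈ A, ∀ b ∈ Bf, (∀ x ∈ b, α < x) → ¬ ∀ x ∈ b, c α x = τ := by
  by_contra hcon
  push_neg at hcon
  have hκℵ : ℵ₀ ≤ κ := hκ.1.le
  have hreg : κ.IsRegular := hκ.isRegular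
  rcases le_or_gt κ μ with hκμ | hμκ
  -- ################ Case κ ≤ μ : rows and columns ################
  · obtain ⟨Φ⟩ : Nonempty ((κ.ord.ToType × κ.ord.ToType) ≃ κ.ord.ToType) := by
      apply Cardinal.eq.mp
      simp only [Cardinal.mk_prod, Cardinal.mk_ord_toType, Cardinal.lift_id]
      exact Cardinal.mul_eq_self hκℵ
    have hne : Nonempty κ.ord.ToType := by
      rw [Ordinal.nonempty_toType_iff]
      intro h0
      have h1 := Cardinal.card_ord κ
      rw [h0, Ordinal.card_zero] at h1
      rw [← h1] at hκℵ
      exact (Cardinal.aleph0_pos.trans_le hκℵ).false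
    set pt : κ.ord.ToType × κ.ord.ToType → Ordinal.{0} := fun z => io κ.ord (Φ z) with hpt
    have hptinj : Function.Injective pt := fun z z' h => Φ.injective (io_inj κ.ord h)
    have hptlt : ∀ z, pt z < κ.ord := fun z => io_lt κ.ord (Φ z)
    set Row : κ.ord.ToType → Set Ordinal.{0} := fun η => Set.range (fun ξ => pt (η, ξ)) with hRow
    set Col : κ.ord.ToType → Set Ordinal.{0} := fun ξ => Set.range (fun η => pt (η, ξ)) with hCol
    have hRowinj : ∀ η, Function.Injective (fun ξ => pt (η, ξ)) := by
      intro η ξ ξ' h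
      exact (Prod.mk.injEq _ _ _ _ ▸ (hptinj h)).2
    have hColinj : ∀ ξ, Function.Injective (fun η => pt (η, ξ)) := by
      intro ξ η η' h
      exact (Prod.mk.injEq _ _ _ _ ▸ (hptinj h)).1
    have hRowmem : ∀ η, Row η ⊆ Set.Iio κ.ord ∧ #(Row η) = Cardinal.lift.{1} κ := by
      intro η
      constructor
      · rintro x ⟨ξ, rfl⟩; exact hptlt _
      · rw [hRow, mk_range_eq_lift' (hRowinj η), Cardinal.mk_ord_toType]
    have hColmem : ∀ ξ, Col ξ ⊆ Set.Iio κ.ord ∧ #(Col ξ) = Cardinal.lift.{1} κ := by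
      intro ξ
      constructor
      · rintro x ⟨η, rfl⟩; exact hptlt _
      · rw [hCol, mk_range_eq_lift' (hColinj ξ), Cardinal.mk_ord_toType]
    have hRowInjF : Function.Injective Row := by
      intro η η' h
      obtain ⟨ξ₀⟩ := hne
      have hx : pt (η, ξ₀) ∈ Row η' := h ▸ ⟨ξ₀, rfl⟩
      obtain ⟨ξ', hξ'⟩ := hx
      exact ((Prod.mk.injEq _ _ _ _ ▸ (hptinj hξ')).1).symm
    have hColInjF : Function.Injective Col := by
      intro ξ ξ' h
      obtain ⟨η₀⟩ := hne
      have hx : pt (η₀, ξ) ∈ Col ξ' := h ▸ ⟨η₀, rfl⟩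
      obtain ⟨η', hη'⟩ := hx
      exact ((Prod.mk.injEq _ _ _ _ ▸ (hptinj hη')).2).symm
    have hRowDisj : ∀ b ∈ Set.range Row, ∀ b' ∈ Set.range Row, b ≠ b' → Disjoint b b' := by
      rintro b ⟨η, rfl⟩ b' ⟨η', rfl⟩ hbb
      rw [Set.disjoint_left]
      rintro x ⟨ξ, rfl⟩ ⟨ξ', hξ'⟩
      exact hbb (congrArg Row ((Prod.mk.injEq _ _ _ _ ▸ (hptinj hξ')).1).symm)
    have hColDisj : ∀ b ∈ Set.range Col, ∀ b' ∈ Set.range Col, b ≠ b' → Disjoint b b' := by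
      rintro b ⟨ξ, rfl⟩ b' ⟨ξ', rfl⟩ hbb
      rw [Set.disjoint_left]
      rintro x ⟨η, rfl⟩ ⟨η', hη'⟩
      exact hbb (congrArg Col ((Prod.mk.injEq _ _ _ _ ▸ (hptinj hη')).2).symm)
    have hRFmk : #(Set.range Row) = Cardinal.lift.{1} κ := by
      rw [mk_range_eq_lift' hRowInjF, Cardinal.mk_ord_toType]
    have hCFmk : #(Set.range Col) = Cardinal.lift.{1} κ := by
      rw [mk_range_eq_lift' hColInjF, Cardinal.mk_ord_toType]
    set D : Set Ordinal.{0} :=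
      {a | a < κ.ord ∧ ∃ η, (∀ x ∈ Row η, a < x) ∧ ∀ x ∈ Row η, c a x = false} with hD
    have hDsub : D ⊆ Set.Iio κ.ord := fun a ha => ha.1
    have hDbig : #D = Cardinal.lift.{1} κ := by
      by_contra hne'
      have hDlt : #D < Cardinal.lift.{1} κ := by
        refine lt_of_le_of_ne ?_ hne'
        rw [← mk_Iio_ord]
        exact Cardinal.mk_le_mk_of_subset hDsub
      obtain ⟨a, ha, b, hb, h1, h2⟩ := hcon (Set.Iio κ.ord \ D) Set.diff_subset
        (compl_big hκℵ hDsub hDlt) κ hκμ (Set.range Row)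
        (by rintro b ⟨η, rfl⟩; exact hRowmem η) hRowDisj hRFmk false
      obtain ⟨η, rfl⟩ := hb
      exact ha.2 ⟨ha.1, η, h1, h2⟩
    obtain ⟨a, haD, b, hb, h1, h2⟩ := hcon D hDsub hDbig κ hκμ (Set.range Col)
      (by rintro b ⟨ξ, rfl⟩; exact hColmem ξ) hColDisj hCFmk true
    obtain ⟨ξ, rfl⟩ := hb
    obtain ⟨-, η, -, hrow⟩ := haD
    have hfalse := hrow (pt (η, ξ)) ⟨ξ, rfl⟩
    have htrue := h2 (pt (η, ξ)) ⟨η, rfl⟩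
    rw [hfalse] at htrue
    exact Bool.false_ne_true htrue
  -- ################ Case μ < κ ################
  · -- μ < κ : use the derived tree
    have hlim := Cardinal.isSuccLimit_ord hκℵ
    have hsucc : ∀ a : Ordinal.{0}, a < κ.ord → a + 1 < κ.ord := by
      intro a ha
      rw [Ordinal.add_one_eq_succ]
      exact hlim.succ_lt ha
    set T : OrdTree := Tr c κ.ord with hTdef
    by_cases hbr : ∃ B, T.CofinalBranch κ.ord B
    · -- branch case
      obtain ⟨B, hBcomp, hBcof⟩ := hbr
      choose z hzB hzlev using hBcof
      have hcoh : ∀ x ∈ B, ∀ y ∈ B, ∀ γ, γ < lev c κ.ord x → γ < lev c κ.ord y →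
          c γ (wv c κ.ord x) = c γ (wv c κ.ord y) := by
        intro x hx y hy γ hγx hγy
        rcases hBcomp x hx y hy with h | h | h
        · rw [h]
        · exact h.2 γ hγx
        · exact (h.2 γ hγy).symm
      set g : Ordinal.{0} → Bool := fun γ =>
        if h : γ + 1 < κ.ord then c γ (wv c κ.ord (z (γ+1) h)) else false with hg
      have hzlev' : ∀ α h, α ≤ lev c κ.ord (z α h) := hzlev
      set βw : ∀ a : Ordinal.{0}, a < κ.ord → Ordinal.{0} :=
        fun a ha => wv c κ.ord (z (a+1) (hsucc a ha)) with hβw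
      have hβw1 : ∀ a ha, a < βw a ha := by
        intro a ha
        calc a < a + 1 := lt_add_one a
          _ ≤ lev c κ.ord (z (a+1) (hsucc a ha)) := hzlev' _ _
          _ ≤ wv c κ.ord (z (a+1) (hsucc a ha)) := lev_le_wv c κ.ord _
      have hβw2 : ∀ a ha, βw a ha < κ.ord := fun a ha => wv_lt c κ.ord _
      have hβw3 : ∀ a ha, ∀ γ ≤ a, c γ (βw a ha) = g γ := by
        intro a ha γ hγ
        have hγθ : γ + 1 < κ.ord := hsucc γ (lt_of_le_of_lt hγ ha)
        rw [hg]
        simp only [dif_pos hγθ]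
        apply hcoh _ (hzB _ _) _ (hzB _ _)
        · exact lt_of_lt_of_le (lt_of_le_of_lt hγ (lt_add_one a)) (hzlev' _ _)
        · exact lt_of_lt_of_le (lt_add_one γ) (hzlev' _ _)
      obtain ⟨t, hts⟩ := bool_big hκℵ g
      have hunb := unbounded_of_big hκℵ hts
      have hpick : ∀ s, s < κ.ord → ∃ γ, (γ < κ.ord ∧ g γ = t) ∧ s < γ := by
        intro s hs
        obtain ⟨γ, hγS, hγgt⟩ := hunb s hs
        exact ⟨γ, hγS, hγgt⟩
      choose pk hpk1 hpk2 using hpick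
      set nxt : Ordinal.{0} → Ordinal.{0} := fun s =>
        if h : s < κ.ord then βw (pk s h) (hpk1 s h).1 else 0 with hnxtdef
      have hnxt : ∀ s < κ.ord, s < nxt s ∧ nxt s < κ.ord := by
        intro s hs
        rw [hnxtdef]
        simp only [dif_pos hs]
        exact ⟨(hpk2 s hs).trans (hβw1 _ (hpk1 s hs).1), hβw2 _ (hpk1 s hs).1⟩
      set ε : κ.ord.ToType → Ordinal.{0} := fun ξ =>
        pk (seqSup κ.ord nxt ξ) (seqSup_lt hreg hnxt ξ) with hε
      have hε1 : ∀ ξ, ε ξ < κ.ord ∧ g (ε ξ) = t := fun ξ => hpk1 _ _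
      have hε2 : ∀ ξ, seqSup κ.ord nxt ξ < ε ξ := fun ξ => hpk2 _ _
      have hseqεq : ∀ ξ, seq κ.ord nxt ξ = βw (ε ξ) (hε1 ξ).1 := by
        intro ξ
        rw [seq_eq, hnxtdef]
        exact dif_pos (seqSup_lt hreg hnxt ξ)
      have hkey : ∀ ζ ξ : κ.ord.ToType, ζ < ξ → βw (ε ζ) (hε1 ζ).1 < ε ξ := by
        intro ζ ξ h
        calc βw (ε ζ) (hε1 ζ).1 = seq κ.ord nxt ζ := (hseqεq ζ).symm
          _ ≤ seqSup κ.ord nxt ξ := le_seqSup h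
          _ < ε ξ := hε2 ξ
      have hεmono : ∀ ζ ξ : κ.ord.ToType, ζ < ξ → ε ζ < ε ξ :=
        fun ζ ξ h => (hβw1 (ε ζ) (hε1 ζ).1).trans (hkey ζ ξ h)
      have hεinj : Function.Injective ε := by
        intro ζ ξ h
        rcases lt_trichotomy ζ ξ with hlt | he | hgt
        · exact absurd h (ne_of_lt (hεmono _ _ hlt))
        · exact he
        · exact absurd h.symm (ne_of_lt (hεmono _ _ hgt))
      set bb : κ.ord.ToType → Set Ordinal.{0} := fun ξ => {βw (ε ξ) (hε1 ξ).1} with hbb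
      have hβwne : ∀ ζ ξ : κ.ord.ToType, ζ ≠ ξ → βw (ε ζ) (hε1 ζ).1 ≠ βw (ε ξ) (hε1 ξ).1 := by
        intro ζ ξ hne h
        rcases lt_trichotomy ζ ξ with hlt | he | hgt
        · have := (hkey ζ ξ hlt).trans (hβw1 (ε ξ) (hε1 ξ).1)
          rw [h] at this
          exact lt_irrefl _ this
        · exact hne he
        · have := (hkey ξ ζ hgt).trans (hβw1 (ε ζ) (hε1 ζ).1)
          rw [← h] at this
          exact lt_irrefl _ this
      have hbbinj : Function.Injective bb := by
        intro ζ ξ h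
        by_contra hne
        apply hβwne ζ ξ hne
        have h2 : βw (ε ζ) (hε1 ζ).1 ∈ bb ξ := by
          rw [← h]
          exact rfl
        rw [hbb] at h2
        exact h2
      obtain ⟨a, haA, b, hbB, h1, h2⟩ := hcon (Set.range ε)
        (by rintro x ⟨ξ, rfl⟩; exact (hε1 ξ).1)
        (by rw [mk_range_eq_lift' hεinj, Cardinal.mk_ord_toType]) 1
        (le_trans Cardinal.one_le_aleph0 hμ) (Set.range bb)
        (by
          rintro b ⟨ξ, rfl⟩
          constructor
          · rintro x hx
            rw [hbb] at hx
            rw [Set.mem_singleton_iff] at hx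
            rw [hx]
            exact hβw2 (ε ξ) (hε1 ξ).1
          · rw [hbb]
            simp)
        (by
          rintro b ⟨ζ, rfl⟩ b' ⟨ξ, rfl⟩ hne
          have hζξ : ζ ≠ ξ := fun h => hne (congrArg bb h)
          rw [hbb, Set.disjoint_singleton_left]
          rw [Set.mem_singleton_iff]
          exact hβwne ζ ξ hζξ)
        (by rw [mk_range_eq_lift' hbbinj, Cardinal.mk_ord_toType]) (!t)
      obtain ⟨ζ, rfl⟩ := haA
      obtain ⟨ξ, rfl⟩ := hbB
      have hcx : c (ε ζ) (βw (ε ξ) (hε1 ξ).1) = !t := h2 _ rfl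
      have hlt' : ε ζ < βw (ε ξ) (hε1 ξ).1 := h1 _ rfl
      have hle : ε ζ ≤ ε ξ := by
        rcases lt_trichotomy ζ ξ with hlt | he | hgt
        · exact le_of_lt (hεmono _ _ hlt)
        · exact le_of_eq (congrArg ε he)
        · exact absurd hlt' (not_lt_of_gt (hkey ξ ζ hgt))
      have hct : c (ε ζ) (βw (ε ξ) (hε1 ξ).1) = t := by
        rw [hβw3 (ε ξ) (hε1 ξ).1 (ε ζ) hle]
        exact (hε1 ζ).2
      rw [hct] at hcx
      cases t <;> simp at hcx
    · -- Aronszajn: use the ascent path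
      have hAr : T.Aronszajn κ := ⟨height_Tr c κ.ord, small_levels c κ.ord hκ rfl, hbr⟩
      obtain ⟨f, hf1, hf2⟩ := hasc T hAr
      have hMne : Nonempty M := by
        rw [← Cardinal.mk_ne_zero_iff, hM]
        exact (Cardinal.aleph0_pos.trans_le hμ).ne'
      have hμκo : μ.ord < κ.ord := Cardinal.ord_lt_ord.mpr hμκ
      have hprin := Ordinal.isPrincipal_add_ord hκℵ
      have hMcard : #M < κ := by rw [hM]; exact hμκ
      have hone : (1 : Ordinal.{0}) < κ.ord :=
        Cardinal.lt_ord.mpr (by simpa using lt_of_lt_of_le Cardinal.one_lt_aleph0 hκℵ)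
      set q : Ordinal.{0} → Ordinal.{0} := fun a => max a (⨆ i : M, wv c κ.ord (f a i)) with hq
      have hqa : ∀ a, a ≤ q a := fun a => le_max_left _ _
      have hqW : ∀ a i, wv c κ.ord (f a i) ≤ q a := fun a i =>
        le_trans (le_ciSup (Ordinal.bddAbove_range _) i) (le_max_right _ _)
      have hqlt : ∀ a < κ.ord, q a < κ.ord := by
        intro a ha
        apply max_lt ha
        exact Cardinal.iSup_lt_ord_of_isRegular hreg hMcard (fun i => wv_lt c κ.ord _)
      have hJeq : #(Unit ⊕ M ⊕ μ.ord.ToType) = μ := by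
        have h2 : μ + μ = μ := Cardinal.add_eq_self hμ
        have h1 : (1 : Cardinal.{0}) + μ = μ :=
          Cardinal.add_eq_right hμ (Cardinal.one_le_aleph0.trans hμ)
        simp only [Cardinal.mk_sum, hM, Cardinal.mk_toType, Cardinal.card_ord,
          Cardinal.lift_id, Cardinal.mk_fintype]
        simp only [Fintype.card_unit, Nat.cast_one]
        rw [h2, h1]
      have hJcard : #(Unit ⊕ M ⊕ μ.ord.ToType) < κ := by rw [hJeq]; exact hμκ
      set bfun : Ordinal.{0} → (Unit ⊕ M ⊕ μ.ord.ToType) → Ordinal.{0} := fun a j =>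
        Sum.elim (fun _ => a)
          (Sum.elim (fun i => wv c κ.ord (f a i)) (fun u => q a + 1 + io μ.ord u)) j with hbf
      set Bs : Ordinal.{0} → Set Ordinal.{0} := fun a => Set.range (bfun a) with hBsdef
      have hbf_lt : ∀ a < κ.ord, ∀ j, bfun a j < κ.ord := by
        rintro a ha (j | i | u)
        · exact ha
        · exact wv_lt c κ.ord _
        · exact hprin (hprin (hqlt a ha) hone) ((io_lt μ.ord u).trans hμκo)
      have hbf_ge : ∀ a < κ.ord, ∀ j, a ≤ bfun a j := by
        rintro a ha (j | i | u)
        · exact le_rfl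
        · have h0 : lev c κ.ord (f a i) = a := hf1 a ha i
          have := lev_le_wv c κ.ord (f a i)
          rwa [h0] at this
        · exact (hqa a).trans ((le_self_add (b := 1)).trans le_self_add)
      have hBsup : ∀ a < κ.ord, (⨆ j, bfun a j) < κ.ord := fun a ha =>
        Cardinal.iSup_lt_ord_of_isRegular hreg hJcard (hbf_lt a ha)
      set nxt : Ordinal.{0} → Ordinal.{0} := fun s => (⨆ j, bfun (s+1) j) + 1 with hnxtdef
      have hnxt : ∀ s < κ.ord, s < nxt s ∧ nxt s < κ.ord := by
        intro s hs
        have hs1 : s + 1 < κ.ord := hsucc s hs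
        constructor
        · calc s < s + 1 := lt_add_one s
            _ = bfun (s+1) (Sum.inl ()) := rfl
            _ ≤ ⨆ j, bfun (s+1) j := le_ciSup (Ordinal.bddAbove_range _) _
            _ < (⨆ j, bfun (s+1) j) + 1 := lt_add_one _
        · exact hsucc _ (hBsup _ hs1)
      set aP : κ.ord.ToType → Ordinal.{0} := fun ξ => seqSup κ.ord nxt ξ + 1 with haPdef
      have haPlt : ∀ ξ, aP ξ < κ.ord := fun ξ => hsucc _ (seqSup_lt hreg hnxt ξ)
      have hseq2 : ∀ ξ, seq κ.ord nxt ξ = (⨆ j, bfun (aP ξ) j) + 1 := fun ξ => seq_eq _ _ _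
      have hBle : ∀ ξ, ∀ x ∈ Bs (aP ξ), x < seq κ.ord nxt ξ := by
        rintro ξ x ⟨j, rfl⟩
        rw [hseq2]
        exact lt_of_le_of_lt (le_ciSup (Ordinal.bddAbove_range _) j) (lt_add_one _)
      have hBge : ∀ ξ, ∀ x ∈ Bs (aP ξ), aP ξ ≤ x := by
        rintro ξ x ⟨j, rfl⟩
        exact hbf_ge _ (haPlt ξ) j
      have hsep : ∀ ζ ξ, ζ < ξ → ∀ x ∈ Bs (aP ζ), ∀ y ∈ Bs (aP ξ), x < y := by
        intro ζ ξ h x hx y hy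
        calc x < seq κ.ord nxt ζ := hBle ζ x hx
          _ ≤ seqSup κ.ord nxt ξ := le_seqSup h
          _ < seqSup κ.ord nxt ξ + 1 := lt_add_one _
          _ ≤ y := hBge ξ y hy
      have hBsinj : Function.Injective (fun ξ => Bs (aP ξ)) := by
        intro ζ ξ h
        by_contra hne
        have hx : aP ζ ∈ Bs (aP ζ) := ⟨Sum.inl (), rfl⟩
        have hy : aP ξ ∈ Bs (aP ξ) := ⟨Sum.inl (), rfl⟩
        have h' : Bs (aP ζ) = Bs (aP ξ) := h
        rcases lt_or_gt_of_ne hne with hlt | hgt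
        · have hx' : aP ζ ∈ Bs (aP ξ) := h' ▸ hx
          exact lt_irrefl _ (hsep ζ ξ hlt _ hx _ hx')
        · have hy' : aP ξ ∈ Bs (aP ζ) := h' ▸ hy
          exact lt_irrefl _ (hsep ξ ζ hgt _ hy _ hy')
      have hBsmk : ∀ a, a < κ.ord → #(Bs a) = Cardinal.lift.{1} μ := by
        intro a ha
        apply le_antisymm
        · have h1 := Cardinal.mk_range_le_lift (f := bfun a)
          rw [hJeq] at h1
          simpa using h1
        · have hpadinj : Function.Injective (fun u : μ.ord.ToType => q a + 1 + io μ.ord u) := by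
            intro u u' h
            apply io_inj μ.ord
            exact (add_right_inj _).mp h
          have hr : Set.range (fun u : μ.ord.ToType => q a + 1 + io μ.ord u) ⊆ Bs a := by
            rintro x ⟨u, rfl⟩
            exact ⟨Sum.inr (Sum.inr u), rfl⟩
          calc Cardinal.lift.{1} μ
              = #(Set.range (fun u : μ.ord.ToType => q a + 1 + io μ.ord u)) := by
                rw [mk_range_eq_lift' hpadinj, Cardinal.mk_toType, Cardinal.card_ord]
            _ ≤ #(Bs a) := Cardinal.mk_le_mk_of_subset hr
      set D : Set Ordinal.{0} := {a | a < κ.ord ∧ ∃ ξ : κ.ord.ToType,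
        (∀ x ∈ Bs (aP ξ), a < x) ∧ ∀ x ∈ Bs (aP ξ), c a x = false} with hDdef
      have hDsub : D ⊆ Set.Iio κ.ord := fun a ha => ha.1
      have hBFmem : ∀ b ∈ Set.range (fun ξ => Bs (aP ξ)),
          b ⊆ Set.Iio κ.ord ∧ #b = Cardinal.lift.{1} μ := by
        rintro b ⟨ξ, rfl⟩
        refine ⟨?_, hBsmk _ (haPlt ξ)⟩
        rintro x ⟨j, rfl⟩
        exact hbf_lt _ (haPlt ξ) j
      have hBFdisj : ∀ b ∈ Set.range (fun ξ => Bs (aP ξ)), ∀ b' ∈ Set.range (fun ξ => Bs (aP ξ)),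
          b ≠ b' → Disjoint b b' := by
        rintro b ⟨ζ, rfl⟩ b' ⟨ξ, rfl⟩ hne
        have hζξ : ζ ≠ ξ := fun h => hne (congrArg (fun ξ => Bs (aP ξ)) h)
        rw [Set.disjoint_left]
        intro x hx hx'
        rcases lt_or_gt_of_ne hζξ with hlt | hgt
        · exact lt_irrefl _ (hsep ζ ξ hlt _ hx _ hx')
        · exact lt_irrefl _ (hsep ξ ζ hgt _ hx' _ hx)
      have hBFmk : #(Set.range (fun ξ => Bs (aP ξ))) = Cardinal.lift.{1} κ := by
        rw [mk_range_eq_lift' hBsinj, Cardinal.mk_ord_toType]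
      have hkeyex : ∀ (a : Ordinal.{0}) (ξ : κ.ord.ToType) (tv : Bool),
          (∀ x ∈ Bs (aP ξ), a < x) → (∀ x ∈ Bs (aP ξ), c a x = tv) →
          a < aP ξ ∧ ∀ i : M, c a (wv c κ.ord (f (aP ξ) i)) = tv := by
        intro a ξ tv hlt hcv
        exact ⟨hlt _ ⟨Sum.inl (), rfl⟩, fun i => hcv _ ⟨Sum.inr (Sum.inl i), rfl⟩⟩
      have hDbig : #D = Cardinal.lift.{1} κ := by
        by_contra hne'
        have hDlt : #D < Cardinal.lift.{1} κ := by
          refine lt_of_le_of_ne ?_ hne'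
          rw [← mk_Iio_ord]
          exact Cardinal.mk_le_mk_of_subset hDsub
        obtain ⟨a, ha, b, hb, h1, h2⟩ := hcon (Set.Iio κ.ord \ D) Set.diff_subset
          (compl_big hκℵ hDsub hDlt) μ le_rfl (Set.range (fun ξ => Bs (aP ξ)))
          hBFmem hBFdisj hBFmk false
        obtain ⟨ξ, rfl⟩ := hb
        exact ha.2 ⟨ha.1, ξ, h1, h2⟩
      obtain ⟨a, haD, b, hb, h1, h2⟩ := hcon D hDsub hDbig μ le_rfl
        (Set.range (fun ξ => Bs (aP ξ))) hBFmem hBFdisj hBFmk true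
      obtain ⟨ξ₁, rfl⟩ := hb
      obtain ⟨haκ, ξ₀, h1₀, h2₀⟩ := haD
      obtain ⟨ha0, hv0⟩ := hkeyex a ξ₀ false h1₀ h2₀
      obtain ⟨ha1, hv1⟩ := hkeyex a ξ₁ true h1 h2
      rcases lt_trichotomy (aP ξ₀) (aP ξ₁) with hlt | he | hgt
      · have hX := hf2 (aP ξ₀) (aP ξ₁) hlt (haPlt ξ₁)
        obtain ⟨i, hi⟩ := Filter.nonempty_of_mem hX
        have hia : a < lev c κ.ord (f (aP ξ₀) i) := by
          have h0 : lev c κ.ord (f (aP ξ₀) i) = aP ξ₀ := hf1 (aP ξ₀) (haPlt ξ₀) i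
          rw [h0]
          exact ha0
        have htr := hi.2 a hia
        rw [hv0 i, hv1 i] at htr
        exact Bool.false_ne_true htr
      · obtain ⟨i⟩ := hMne
        have hx := hv0 i
        rw [he, hv1 i] at hx
        exact Bool.false_ne_true hx.symm
      · have hX := hf2 (aP ξ₁) (aP ξ₀) hgt (haPlt ξ₀)
        obtain ⟨i, hi⟩ := Filter.nonempty_of_mem hX
        have hia : a < lev c κ.ord (f (aP ξ₁) i) := by
          have h0 : lev c κ.ord (f (aP ξ₁) i) = aP ξ₁ := hf1 (aP ξ₁) (haPlt ξ₁) i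
          rw [h0]
          exact ha1
        have htr := hi.2 a hia
        rw [hv0 i, hv1 i] at htr
        exact Bool.false_ne_true htr.symm
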